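/- (Suboptimality of policies induced by tight constraints.) Let π = (μ_0,…,μ_{N−1}) be any Markov policy and let V_k^π(x) = P_{k,x}^π( x_j ∈ A for all k ≤ j ≤ N ). Then for every 0 ≤ k < N and x ∈ A, V_k^π(x) ≤ ∫_A W_{k+1}(y) T(dy|x,μ_k(x)). In particular, if for some x ∈ A the chosen input ũ = μ_k(x) satisfies ∫_A W_{k+1}(y) T(dy|x,ũ) < W_k(x), then V_k^π(x) < W_k(x), i.e. the policy is strictly suboptimal at x. -/

import Mathlib

open MeasureTheory ProbabilityTheory Set

noncomputable section

namespace StochasticSafety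

variable {X U : Type*} [MeasurableSpace X] [MeasurableSpace U]

/-- A Markov policy: a sequence of (Borel-)measurable maps from states to actions. -/
structure Policy (X U : Type*) [MeasurableSpace X] [MeasurableSpace U] where
  act : ℕ → X → U
  measurable_act : ∀ k, Measurable (act k)

/-- The closed-loop kernel `κ_k^π(·|x) = T(·|x, μ_k(x))` of a policy at time `k`. -/
def Policy.kernel (T : Kernel (X × U) X) (π : Policy X U) (k : ℕ) : Kernel X X :=
  T.comap (fun x => (x, π.act k x)) (measurable_id.prodMk (π.measurable_act k))

/-- One step of the closed-loop trajectory evolution at time `j`: given the trajectory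
built so far, sample `y` from `κ` applied at coordinate `j` and record it at
coordinate `j + 1`. -/
def step (κ : Kernel X X) (j : ℕ) : Kernel (ℕ → X) (ℕ → X) :=
  Kernel.map (Kernel.id ×ₖ κ.comap (fun ω => ω j) (measurable_pi_apply j))
    (fun p => Function.update p.1 (j + 1) p.2)

/-- Kernel describing `m` steps of the trajectory evolution, starting at time `k`,
under the time-dependent kernels `κ`. -/
def evolve (κ : ℕ → Kernel X X) : ℕ → ℕ → Kernel (ℕ → X) (ℕ → X)
  | _, 0 => Kernel.id
  | k, (m + 1) => (evolve κ (k + 1) m) ∘ₖ step (κ k) k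

/-- The law `P_{k,x}^π` of the closed-loop trajectory `(x_k, …, x_N)` started at `x`
at time `k` under policy `π` (finite Ionescu–Tulcea composition of the closed-loop
kernels): the states `x_k, …, x_N` are recorded in coordinates `k, …, N` of `ℕ → X`,
all other coordinates carry the irrelevant initial value `x`. -/
def trajLaw (T : Kernel (X × U) X) (π : Policy X U) (N k : ℕ) (x : X) :
    Measure (ℕ → X) :=
  evolve (π.kernel T) k (N - k) (fun _ => x)

/-- The event that the trajectory stays in `A` at all times `j` with `k ≤ j ≤ N`. -/
def safeEvent (A : Set X) (k N : ℕ) : Set (ℕ → X) :=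
  {ω | ∀ j, k ≤ j → j ≤ N → ω j ∈ A}

/-- The event that the trajectory visits `A` at some time `j` with `k ≤ j ≤ N`. -/
def reachEvent (A : Set X) (k N : ℕ) : Set (ℕ → X) :=
  {ω | ∃ j, k ≤ j ∧ j ≤ N ∧ ω j ∈ A}


variable [StandardBorelSpace X] [TopologicalSpace U]
  [TopologicalSpace.MetrizableSpace U] [CompactSpace U] [Nonempty U] [BorelSpace U]

open scoped ENNReal

/-- Auxiliary value function on `ℝ≥0∞` for a concrete sequence of closed-loop kernels. -/
def gfun (κ : ℕ → Kernel X X) (A : Set X) : ℕ → ℕ → X → ℝ≥0∞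
  | 0, _, x => A.indicator 1 x
  | (m + 1), j, x => A.indicator (fun x' => ∫⁻ y, gfun κ A m (j + 1) y ∂(κ j x')) x

lemma gfun_of_not_mem {κ : ℕ → Kernel X X} {A : Set X} {m j : ℕ} {x : X} (hx : x ∉ A) :
    gfun κ A m j x = 0 := by
  cases m <;> simp [gfun, Set.indicator_of_notMem hx]

lemma step_apply (κ : Kernel X X) [IsSFiniteKernel κ] (j : ℕ) (ω₀ : ℕ → X) :
    step κ j ω₀ = (κ (ω₀ j)).map (Function.update ω₀ (j + 1)) := by
  rw [step, Kernel.map_apply _ measurable_update', Kernel.prod_apply, Kernel.id_apply,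
    Kernel.comap_apply, Measure.dirac_prod,
    Measure.map_map measurable_update' measurable_prodMk_left]
  rfl

lemma measurableSet_safeEvent {A : Set X} (hA : MeasurableSet A) (k N : ℕ) :
    MeasurableSet (safeEvent A k N) := by
  have : safeEvent A k N
      = ⋂ (j : ℕ) (_ : k ≤ j) (_ : j ≤ N), (fun ω : ℕ → X => ω j) ⁻¹' A := by
    ext ω; simp [safeEvent]
  rw [this]
  exact MeasurableSet.iInter fun j => MeasurableSet.iInter fun _ =>
    MeasurableSet.iInter fun _ => (measurable_pi_apply j) hA

lemma evolve_eval_ne [MeasurableSingletonClass X]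
    (κ : ℕ → Kernel X X) [∀ n, IsSFiniteKernel (κ n)] :
    ∀ (m j i : ℕ), i ≤ j → ∀ ω₀ : ℕ → X,
      evolve κ j m ω₀ {ω | ω i ≠ ω₀ i} = 0 := by
  intro m
  induction m with
  | zero =>
    intro j i hij ω₀
    have hs : MeasurableSet {ω : ℕ → X | ω i ≠ ω₀ i} := by
      have he : {ω : ℕ → X | ω i ≠ ω₀ i} = (fun ω : ℕ → X => ω i) ⁻¹' ({ω₀ i}ᶜ) := by
        ext ω; simp
      rw [he]
      exact (measurable_pi_apply i) (measurableSet_singleton _).compl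
    show Kernel.id ω₀ _ = 0
    rw [Kernel.id_apply, Measure.dirac_apply' _ hs]
    simp
  | succ m ih =>
    intro j i hij ω₀
    have hs : MeasurableSet {ω : ℕ → X | ω i ≠ ω₀ i} := by
      have he : {ω : ℕ → X | ω i ≠ ω₀ i} = (fun ω : ℕ → X => ω i) ⁻¹' ({ω₀ i}ᶜ) := by
        ext ω; simp
      rw [he]
      exact (measurable_pi_apply i) (measurableSet_singleton _).compl
    show (evolve κ (j + 1) m ∘ₖ step (κ j) j) ω₀ _ = 0
    rw [Kernel.comp_apply' _ _ _ hs, step_apply,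
      lintegral_map (Kernel.measurable_coe _ hs) (measurable_update _)]
    have : ∀ y : X,
        evolve κ (j + 1) m (Function.update ω₀ (j + 1) y) {ω | ω i ≠ ω₀ i} = 0 := by
      intro y
      have hupd : Function.update ω₀ (j + 1) y i = ω₀ i :=
        Function.update_of_ne (by omega) _ _
      have := ih (j + 1) i (by omega) (Function.update ω₀ (j + 1) y)
      rw [hupd] at this
      exact this
    simp [this]

lemma safeEvent_split (A : Set X) (j m : ℕ) :
    safeEvent A j (j + (m + 1))
      = {ω : ℕ → X | ω j ∈ A} ∩ safeEvent A (j + 1) (j + (m + 1)) := by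
  ext ω
  constructor
  · intro h
    exact ⟨h j le_rfl (by omega), fun i h1 h2 => h i (by omega) h2⟩
  · rintro ⟨h1, h2⟩ i hji hile
    rcases eq_or_lt_of_le hji with rfl | hlt
    · exact h1
    · exact h2 i (by omega) hile

lemma evolve_safe [MeasurableSingletonClass X]
    (κ : ℕ → Kernel X X) [∀ n, IsSFiniteKernel (κ n)] {A : Set X} (hA : MeasurableSet A) :
    ∀ (m j : ℕ) (ω₀ : ℕ → X),
      evolve κ j m ω₀ (safeEvent A j (j + m)) = gfun κ A m j (ω₀ j) := by
  intro m
  induction m with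
  | zero =>
    intro j ω₀
    show Kernel.id ω₀ _ = _
    rw [Kernel.id_apply, Measure.dirac_apply' _ (measurableSet_safeEvent hA _ _)]
    by_cases h : ω₀ j ∈ A
    · have hmem : ω₀ ∈ safeEvent A j (j + 0) := by
        intro i h1 h2
        have : i = j := by omega
        rwa [this]
      rw [Set.indicator_of_mem hmem]
      simp [gfun, Set.indicator_of_mem h]
    · have hmem : ω₀ ∉ safeEvent A j (j + 0) := fun hc => h (hc j le_rfl (by omega))
      rw [Set.indicator_of_notMem hmem]
      simp [gfun, Set.indicator_of_notMem h]
  | succ m ih =>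
    intro j ω₀
    classical
    have hS : MeasurableSet (safeEvent A j (j + (m + 1))) := measurableSet_safeEvent hA _ _
    have hS2 : MeasurableSet (safeEvent A (j + 1) (j + (m + 1))) :=
      measurableSet_safeEvent hA _ _
    show (evolve κ (j + 1) m ∘ₖ step (κ j) j) ω₀ _ = _
    rw [Kernel.comp_apply' _ _ _ hS, step_apply,
      lintegral_map (Kernel.measurable_coe _ hS) (measurable_update _)]
    have key : ∀ y : X,
        evolve κ (j + 1) m (Function.update ω₀ (j + 1) y) (safeEvent A j (j + (m + 1)))
          = if ω₀ j ∈ A then gfun κ A m (j + 1) y else 0 := by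
      intro y
      set ω₁ := Function.update ω₀ (j + 1) y with hω₁
      have h1j : ω₁ j = ω₀ j := Function.update_of_ne (by omega) _ _
      have hnull : evolve κ (j + 1) m ω₁ {ω | ω j ≠ ω₁ j} = 0 :=
        evolve_eval_ne κ m (j + 1) j (by omega) ω₁
      by_cases h : ω₀ j ∈ A
      · rw [if_pos h]
        have hcongr : evolve κ (j + 1) m ω₁ (safeEvent A j (j + (m + 1)))
            = evolve κ (j + 1) m ω₁ (safeEvent A (j + 1) (j + (m + 1))) := by
          apply measure_congr
          rw [ae_eq_set]
          constructor
          · have hsub : safeEvent A j (j + (m + 1)) ⊆ safeEvent A (j + 1) (j + (m + 1)) := by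
              rw [safeEvent_split]; exact Set.inter_subset_right
            rw [Set.diff_eq_empty.mpr hsub]; simp
          · refine measure_mono_null (fun ω hω => ?_) hnull
            intro hc
            apply hω.2
            rw [safeEvent_split]
            exact ⟨by rw [Set.mem_setOf_eq, hc, h1j]; exact h, hω.1⟩
        rw [hcongr]
        have := ih (j + 1) ω₁
        have harith : j + 1 + m = j + (m + 1) := by omega
        rw [harith] at this
        rw [this, hω₁, Function.update_self]
      · rw [if_neg h]
        refine measure_mono_null (fun ω hω => ?_) hnull
        intro hc
        apply h
        have := hω j le_rfl (by omega)
        rwa [hc, h1j] at this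
    by_cases h : ω₀ j ∈ A
    · simp only [key, if_pos h]
      simp only [gfun]
      rw [Set.indicator_of_mem h]
    · simp only [key, if_neg h]
      simp only [gfun]
      rw [Set.indicator_of_notMem h]
      simp


/-- suboptimality of policies induced by tight constraints: for any
Markov policy `π`, any `k < N` and any `x ∈ A`, the policy safety value satisfies
`V_k^π(x) ≤ ∫_A W_{k+1}(y) T(dy|x, μ_k(x))`; in particular if the chosen input
`ũ = μ_k(x)` satisfies `∫_A W_{k+1}(y) T(dy|x,ũ) < W_k(x)` then `V_k^π(x) < W_k(x)`,
i.e. the policy is strictly suboptimal at `x`. -/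
theorem tight_constraint_policy_suboptimal
    (T : Kernel (X × U) X) [IsMarkovKernel T]
    (N : ℕ) (A : Set X) (hA : MeasurableSet A)
    (W : ℕ → X → ℝ) (hWmeas : ∀ k, Measurable (W k))
    (hWN : ∀ x, W N x = A.indicator 1 x)
    (hW : ∀ k < N, ∀ x,
      W k x = ⨆ u : U, A.indicator (fun x' => ∫ y, W (k + 1) y ∂(T (x', u))) x)
    (π : Policy X U) :
    ∀ k < N, ∀ x ∈ A,
      (trajLaw T π N k x (safeEvent A k N)).toReal
          ≤ ∫ y in A, W (k + 1) y ∂(T (x, π.act k x)) ∧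
      ((∫ y in A, W (k + 1) y ∂(T (x, π.act k x))) < W k x →
        (trajLaw T π N k x (safeEvent A k N)).toReal < W k x) := by
  -- bounds 0 ≤ W k ≤ 1
  have hWb : ∀ d k, k + d = N → ∀ x, 0 ≤ W k x ∧ W k x ≤ 1 := by
    intro d
    induction d with
    | zero =>
      intro k hk x
      have : k = N := by omega
      subst this
      rw [hWN x]
      by_cases hx : x ∈ A
      · simp [Set.indicator_of_mem hx]
      · simp [Set.indicator_of_notMem hx]
    | succ d ihd =>
      intro k hk x
      have hkN : k < N := by omega
      have ih1 : ∀ y, 0 ≤ W (k + 1) y ∧ W (k + 1) y ≤ 1 := ihd (k + 1) (by omega)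
      have hint : ∀ (x' : X) (u : U), Integrable (W (k + 1)) (T (x', u)) := by
        intro x' u
        refine Integrable.mono' (integrable_const 1) (hWmeas _).aestronglyMeasurable
          (ae_of_all _ fun y => ?_)
        rw [Real.norm_eq_abs, abs_le]
        exact ⟨by linarith [(ih1 y).1], (ih1 y).2⟩
      have hbd : ∀ u : U,
          A.indicator (fun x' => ∫ y, W (k + 1) y ∂(T (x', u))) x ∈ Set.Icc (0 : ℝ) 1 := by
        intro u
        by_cases hx : x ∈ A
        · rw [Set.indicator_of_mem hx]
          constructor
          · exact integral_nonneg fun y => (ih1 y).1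
          · calc ∫ y, W (k + 1) y ∂(T (x, u)) ≤ ∫ _, (1 : ℝ) ∂(T (x, u)) :=
                integral_mono (hint x u) (integrable_const 1) fun y => (ih1 y).2
              _ = 1 := by simp
        · simp [Set.indicator_of_notMem hx]
      have hbdd : BddAbove (Set.range fun u : U =>
          A.indicator (fun x' => ∫ y, W (k + 1) y ∂(T (x', u))) x) := by
        refine ⟨1, ?_⟩
        rintro r ⟨u, rfl⟩
        exact (hbd u).2
      rw [hW k hkN x]
      constructor
      · obtain ⟨u⟩ := (inferInstance : Nonempty U)
        exact le_trans (hbd u).1 (le_ciSup hbdd u)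
      · exact ciSup_le fun u => (hbd u).2
  have hWle : ∀ k, k ≤ N → ∀ x, 0 ≤ W k x ∧ W k x ≤ 1 :=
    fun k hk x => hWb (N - k) k (by omega) x
  have hint : ∀ j, j < N → ∀ (x' : X) (u : U), Integrable (W (j + 1)) (T (x', u)) := by
    intro j hj x' u
    refine Integrable.mono' (integrable_const 1) (hWmeas _).aestronglyMeasurable
      (ae_of_all _ fun y => ?_)
    have := hWle (j + 1) (by omega) y
    rw [Real.norm_eq_abs, abs_le]
    exact ⟨by linarith [this.1], this.2⟩
  -- the key DP comparison: gfun ≤ ofReal ∘ W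
  have key : ∀ m j, j + m = N → ∀ y : X,
      gfun (π.kernel T) A m j y ≤ ENNReal.ofReal (W j y) := by
    intro m
    induction m with
    | zero =>
      intro j hj y
      have : j = N := by omega
      subst this
      rw [hWN y]
      by_cases hy : y ∈ A
      · simp [gfun, Set.indicator_of_mem hy]
      · simp [gfun, Set.indicator_of_notMem hy]
    | succ m ihm =>
      intro j hj y
      have hjN : j < N := by omega
      by_cases hy : y ∈ A
      · simp only [gfun]
        rw [Set.indicator_of_mem hy]
        have hker : π.kernel T j y = T (y, π.act j y) := by
          rw [Policy.kernel, Kernel.comap_apply]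
        rw [hker]
        have step1 : ∫⁻ z, gfun (π.kernel T) A m (j + 1) z ∂(T (y, π.act j y))
            ≤ ∫⁻ z, ENNReal.ofReal (W (j + 1) z) ∂(T (y, π.act j y)) :=
          lintegral_mono fun z => ihm (j + 1) (by omega) z
        have step2 : ∫⁻ z, ENNReal.ofReal (W (j + 1) z) ∂(T (y, π.act j y))
            = ENNReal.ofReal (∫ z, W (j + 1) z ∂(T (y, π.act j y))) :=
          (ofReal_integral_eq_lintegral_ofReal (hint j hjN y _)
            (ae_of_all _ fun z => (hWle (j + 1) (by omega) z).1)).symm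
        refine le_trans step1 (le_trans (le_of_eq step2) (ENNReal.ofReal_le_ofReal ?_))
        rw [hW j hjN y]
        have hbdd : BddAbove (Set.range fun u : U =>
            A.indicator (fun x' => ∫ z, W (j + 1) z ∂(T (x', u))) y) := by
          refine ⟨1, ?_⟩
          rintro r ⟨u, rfl⟩
          dsimp only
          by_cases hy' : y ∈ A
          · rw [Set.indicator_of_mem hy']
            calc ∫ z, W (j + 1) z ∂(T (y, u)) ≤ ∫ _, (1 : ℝ) ∂(T (y, u)) :=
                integral_mono (hint j hjN y u) (integrable_const 1)
                  fun z => (hWle (j + 1) (by omega) z).2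
              _ = 1 := by simp
          · simp [Set.indicator_of_notMem hy']
        have := le_ciSup hbdd (π.act j y)
        rwa [Set.indicator_of_mem hy] at this
      · rw [gfun_of_not_mem hy]
        exact zero_le
  -- main statement
  intro k hk x hx
  haveI hsf : ∀ n, IsSFiniteKernel (π.kernel T n) := fun n => by
    rw [Policy.kernel]; infer_instance
  have hμker : π.kernel T k x = T (x, π.act k x) := by
    rw [Policy.kernel, Kernel.comap_apply]
  set μ := T (x, π.act k x) with hμ
  set m := N - (k + 1) with hm
  have hNk : N - k = m + 1 := by omega
  have htraj : trajLaw T π N k x (safeEvent A k N)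
      = gfun (π.kernel T) A (N - k) k x := by
    have h1 : k + (N - k) = N := by omega
    have h2 := evolve_safe (π.kernel T) hA (N - k) k (fun _ => x)
    rw [h1] at h2
    exact h2
  have hmain : trajLaw T π N k x (safeEvent A k N)
      ≤ ENNReal.ofReal (∫ y in A, W (k + 1) y ∂μ) := by
    rw [htraj, hNk]
    simp only [gfun]
    rw [Set.indicator_of_mem hx, hμker]
    have heq : (fun z => gfun (π.kernel T) A m (k + 1) z)
        = A.indicator (fun z => gfun (π.kernel T) A m (k + 1) z) := by
      ext z
      by_cases hz : z ∈ A
      · rw [Set.indicator_of_mem hz]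
      · rw [Set.indicator_of_notMem hz, gfun_of_not_mem hz]
    rw [show (∫⁻ z, gfun (π.kernel T) A m (k + 1) z ∂μ)
        = ∫⁻ z, A.indicator (fun z => gfun (π.kernel T) A m (k + 1) z) z ∂μ by rw [← heq],
      lintegral_indicator hA]
    have step1 : ∫⁻ z in A, gfun (π.kernel T) A m (k + 1) z ∂μ
        ≤ ∫⁻ z in A, ENNReal.ofReal (W (k + 1) z) ∂μ :=
      lintegral_mono fun z => key m (k + 1) (by omega) z
    have step2 : ∫⁻ z in A, ENNReal.ofReal (W (k + 1) z) ∂μ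
        = ENNReal.ofReal (∫ z in A, W (k + 1) z ∂μ) :=
      (ofReal_integral_eq_lintegral_ofReal ((hint k hk x _).restrict)
        (ae_of_all _ fun z => (hWle (k + 1) (by omega) z).1)).symm
    exact le_trans step1 (le_of_eq step2)
  have hnn : 0 ≤ ∫ y in A, W (k + 1) y ∂μ :=
    setIntegral_nonneg hA fun y _ => (hWle (k + 1) (by omega) y).1
  have part1 : (trajLaw T π N k x (safeEvent A k N)).toReal
      ≤ ∫ y in A, W (k + 1) y ∂(T (x, π.act k x)) :=
    ENNReal.toReal_le_of_le_ofReal hnn hmain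
  exact ⟨part1, fun hlt => lt_of_le_of_lt part1 hlt⟩


end StochasticSafety
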